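/- Let g_1,…,g_n : ℤ → [0,+∞] be functions, none identically +∞, and define g : ℤ^n → [0,+∞] by g(k_1,…,k_n) = Σ_i g_i(k_i). Then the convex extension satisfies g̃(x_1,…,x_n) = Σ_i g̃_i(x_i) for all x ∈ ℝ^n. -/

import Mathlib

/-- The convex extension of `g : ℤ → (-∞,+∞]`: the supremum of all affine
functions on `ℝ` lying below `g` on the integers. -/
noncomputable def convExt1 (g : ℤ → EReal) (x : ℝ) : EReal :=
  ⨆ (c : ℝ × ℝ) (_ : ∀ k : ℤ, ((c.1 * (k : ℝ) + c.2 : ℝ) : EReal) ≤ g k),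
    ((c.1 * x + c.2 : ℝ) : EReal)

/-- The convex extension of `g : ℤⁿ → (-∞,+∞]`: the supremum of all affine
functions on `ℝⁿ` lying below `g` on the lattice points. -/
noncomputable def convExtN {n : ℕ} (g : (Fin n → ℤ) → EReal) (x : Fin n → ℝ) : EReal :=
  ⨆ (c : (Fin n → ℝ) × ℝ)
    (_ : ∀ k : Fin n → ℤ, (((∑ i, c.1 i * (k i : ℝ)) + c.2 : ℝ) : EReal) ≤ g k),
    (((∑ i, c.1 i * x i) + c.2 : ℝ) : EReal)

lemma ereal_coe_finset_sum {α : Type*} (s : Finset α) (f : α → ℝ) :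
    ((∑ i ∈ s, f i : ℝ) : EReal) = ∑ i ∈ s, ((f i : EReal)) := by
  classical
  induction s using Finset.induction_on with
  | empty => simp
  | insert a s h ih => simp [Finset.sum_insert h, EReal.coe_add, ih]

/-- Sum of suprema of (real-valued, nonempty-indexed) families is at most any common
bound on the sums over selections. -/
lemma sum_iSup_le_aux {n : ℕ} {ι : Fin n → Type*} [inst : ∀ i, Nonempty (ι i)]
    (v : ∀ i, ι i → ℝ) (s : Finset (Fin n)) :
    ∑ i ∈ s, (⨆ j, ((v i j : ℝ) : EReal)) ≤
      ⨆ σ : (∀ i, ι i), ((∑ i ∈ s, v i (σ i) : ℝ) : EReal) := by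
  classical
  induction s using Finset.induction_on with
  | empty =>
      simp only [Finset.sum_empty]
      have : Nonempty (∀ i, ι i) := ⟨fun i => Classical.arbitrary _⟩
      obtain ⟨σ⟩ := this
      exact le_trans (by norm_num) (le_iSup (fun σ : (∀ i, ι i) =>
        ((∑ i ∈ (∅ : Finset (Fin n)), v i (σ i) : ℝ) : EReal)) σ)
  | insert a s h ih =>
      rw [Finset.sum_insert h]
      apply EReal.add_le_of_forall_lt
      intro p hp q hq
      rw [lt_iSup_iff] at hp
      obtain ⟨j, hj⟩ := hp
      obtain ⟨σ, hσ⟩ := lt_iSup_iff.1 (lt_of_lt_of_le hq ih)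
      have key : ((∑ i ∈ insert a s, v i ((Function.update σ a j) i) : ℝ) : EReal)
          ≤ ⨆ σ : (∀ i, ι i), ((∑ i ∈ insert a s, v i (σ i) : ℝ) : EReal) :=
        le_iSup (fun σ : (∀ i, ι i) =>
          ((∑ i ∈ insert a s, v i (σ i) : ℝ) : EReal)) (Function.update σ a j)
      have hsum : (∑ i ∈ insert a s, v i ((Function.update σ a j) i) : ℝ)
          = v a j + ∑ i ∈ s, v i (σ i) := by
        rw [Finset.sum_insert h, Function.update_self]
        congr 1
        apply Finset.sum_congr rfl
        intro i hi
        rw [Function.update_of_ne (by rintro rfl; exact h hi)]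
      calc p + q ≤ ((v a j : ℝ) : EReal) + ((∑ i ∈ s, v i (σ i) : ℝ) : EReal) :=
              add_le_add hj.le hσ.le
        _ = ((v a j + ∑ i ∈ s, v i (σ i) : ℝ) : EReal) := by rw [EReal.coe_add]
        _ ≤ _ := by rw [← hsum]; exact key

/-- Separability of the convex extension: if `g(k₁,…,kₙ) = Σᵢ gᵢ(kᵢ)` with each
`gᵢ : ℤ → [0,+∞]` not identically `+∞`, then `g̃(x) = Σᵢ g̃ᵢ(xᵢ)`. -/
theorem convExt_sum {n : ℕ} (g : Fin n → ℤ → EReal)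
    (hg0 : ∀ i k, 0 ≤ g i k) (hgfin : ∀ i, ∃ k, g i k ≠ ⊤) :
    ∀ x : Fin n → ℝ,
      convExtN (fun k : Fin n → ℤ => ∑ i, g i (k i)) x = ∑ i, convExt1 (g i) (x i) := by
  classical
  intro x
  have hgbot : ∀ i k, g i k ≠ ⊥ := fun i k => ne_of_gt (lt_of_lt_of_le (by norm_num : (⊥:EReal) < 0) (hg0 i k))
  -- choose, for each i, a lattice point where g i is finite
  choose k0 hk0 using hgfin
  apply le_antisymm
  · -- hard direction ≤ : decompose an affine minorant of the sum
    apply iSup_le; intro c; apply iSup_le; intro hc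
    -- the set of achievable slack values for coordinate i
    set B : Fin n → Set ℝ :=
      fun i => {t : ℝ | ∃ k : ℤ, g i k ≠ ⊤ ∧ t = c.1 i * k - (g i k).toReal} with hB
    have hBne : ∀ i, (B i).Nonempty := fun i => ⟨_, k0 i, hk0 i, rfl⟩
    -- a key consequence of admissibility of c at finite points
    have hkey : ∀ k : Fin n → ℤ, (∀ i, g i (k i) ≠ ⊤) →
        (∑ i, c.1 i * (k i : ℝ)) + c.2 ≤ ∑ i, (g i (k i)).toReal := by
      intro k hk
      have h1 : (((∑ i, c.1 i * (k i : ℝ)) + c.2 : ℝ) : EReal) ≤ ∑ i, g i (k i) := hc k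
      have h2 : (∑ i, g i (k i)) = ((∑ i, (g i (k i)).toReal : ℝ) : EReal) := by
        rw [ereal_coe_finset_sum]
        apply Finset.sum_congr rfl
        intro i _
        rw [EReal.coe_toReal (hk i) (hgbot i (k i))]
      rw [h2] at h1
      exact_mod_cast h1
    have hBbdd : ∀ i, BddAbove (B i) := by
      intro i
      refine ⟨-c.2 - ∑ j ∈ Finset.univ.erase i, (c.1 j * (k0 j : ℝ) - (g j (k0 j)).toReal), ?_⟩
      rintro t ⟨k, hk, rfl⟩
      have := hkey (Function.update k0 i k) (by
        intro j
        by_cases hj : j = i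
        · subst hj; simpa using hk
        · rw [Function.update_of_ne hj]; exact hk0 j)
      have e1 : ∀ (f : Fin n → ℝ), ∑ j, (fun j => f j) j =
          f i + ∑ j ∈ Finset.univ.erase i, f j := by
        intro f
        rw [← Finset.add_sum_erase _ _ (Finset.mem_univ i)]
      rw [e1 (fun j => c.1 j * ((Function.update k0 i k j : ℤ) : ℝ)),
          e1 (fun j => (g j (Function.update k0 i k j)).toReal)] at this
      have e2 : ∑ j ∈ Finset.univ.erase i, c.1 j * ((Function.update k0 i k j : ℤ) : ℝ)
          = ∑ j ∈ Finset.univ.erase i, c.1 j * ((k0 j : ℤ) : ℝ) := by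
        apply Finset.sum_congr rfl; intro j hj
        rw [Function.update_of_ne (Finset.ne_of_mem_erase hj)]
      have e3 : ∑ j ∈ Finset.univ.erase i, (g j (Function.update k0 i k j)).toReal
          = ∑ j ∈ Finset.univ.erase i, (g j (k0 j)).toReal := by
        apply Finset.sum_congr rfl; intro j hj
        rw [Function.update_of_ne (Finset.ne_of_mem_erase hj)]
      rw [e2, e3, Function.update_self] at this
      rw [Finset.sum_sub_distrib]
      linarith
    set t : Fin n → ℝ := fun i => sSup (B i) with ht
    -- each (c.1 i, -t i) is admissible for g i
    have hadm : ∀ i, ∀ k : ℤ, ((c.1 i * (k : ℝ) + (-(t i)) : ℝ) : EReal) ≤ g i k := by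
      intro i k
      by_cases hk : g i k = ⊤
      · rw [hk]; exact le_top
      · have hmem : c.1 i * (k : ℝ) - (g i k).toReal ≤ t i :=
          le_csSup (hBbdd i) ⟨k, hk, rfl⟩
        have : (c.1 i * (k : ℝ) + (-(t i)) : ℝ) ≤ (g i k).toReal := by linarith
        calc ((c.1 i * (k : ℝ) + (-(t i)) : ℝ) : EReal)
            ≤ (((g i k).toReal : ℝ) : EReal) := EReal.coe_le_coe_iff.2 this
          _ = g i k := EReal.coe_toReal hk (hgbot i k)
    -- the total slack bound: ∑ t i ≤ -c.2
    have hslack : ∑ i, t i ≤ -c.2 := by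
      by_contra hcon
      push_neg at hcon
      set ε : ℝ := (∑ i, t i) - (-c.2) with hε
      have hεpos : 0 < ε := by simp only [hε]; linarith
      have hchoice : ∀ i, ∃ k : ℤ, g i k ≠ ⊤ ∧
          t i - ε / (n + 1) < c.1 i * (k : ℝ) - (g i k).toReal := by
        intro i
        have hlt : t i - ε / (n + 1) < sSup (B i) := by
          have : 0 < ε / (n + 1) := by positivity
          simp only [ht]; linarith
        obtain ⟨b, ⟨k, hk, rfl⟩, hb⟩ := exists_lt_of_lt_csSup (hBne i) hlt
        exact ⟨k, hk, hb⟩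
      choose k hk1 hk2 using hchoice
      have hkey2 := hkey k hk1
      have hsum2 : ∑ i, (t i - ε / (n + 1)) ≤
          ∑ i, (c.1 i * ((k i : ℤ) : ℝ) - (g i (k i)).toReal) :=
        Finset.sum_le_sum (fun i _ => (hk2 i).le)
      rw [Finset.sum_sub_distrib, Finset.sum_sub_distrib, Finset.sum_const,
        Finset.card_univ, Fintype.card_fin] at hsum2
      have hn : (n : ℝ) * (ε / (n + 1)) < ε := by
        rw [mul_div_assoc']
        rw [div_lt_iff₀ (by positivity)]
        nlinarith
      simp only [nsmul_eq_mul] at hsum2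
      have : ∑ i, t i - ε < ∑ i, c.1 i * ((k i : ℤ) : ℝ) - ∑ i, (g i (k i)).toReal := by
        linarith
      simp only [hε] at this
      linarith
    -- conclude
    have step1 : ((∑ i, c.1 i * x i) + c.2 : ℝ) ≤ ∑ i, (c.1 i * x i + (-(t i))) := by
      rw [Finset.sum_add_distrib, Finset.sum_neg_distrib]
      linarith
    calc (((∑ i, c.1 i * x i) + c.2 : ℝ) : EReal)
        ≤ ((∑ i, (c.1 i * x i + (-(t i))) : ℝ) : EReal) := EReal.coe_le_coe_iff.2 step1
      _ = ∑ i, ((c.1 i * x i + (-(t i)) : ℝ) : EReal) := ereal_coe_finset_sum _ _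
      _ ≤ ∑ i, convExt1 (g i) (x i) := by
          apply Finset.sum_le_sum
          intro i _
          exact le_iSup₂ (f := fun (c : ℝ × ℝ)
            (_ : ∀ k : ℤ, ((c.1 * (k : ℝ) + c.2 : ℝ) : EReal) ≤ g i k) =>
            ((c.1 * x i + c.2 : ℝ) : EReal)) (c.1 i, -(t i)) (hadm i)
  · -- easy direction ≥ : sum of suprema ≤ supremum
    set ι : Fin n → Type _ :=
      fun i => {c : ℝ × ℝ // ∀ k : ℤ, ((c.1 * (k : ℝ) + c.2 : ℝ) : EReal) ≤ g i k} with hι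
    have : ∀ i, Nonempty (ι i) := by
      intro i
      refine ⟨⟨(0, 0), ?_⟩⟩
      intro k
      simpa using hg0 i k
    have hconv1 : ∀ i, convExt1 (g i) (x i) = ⨆ j : ι i, ((j.1.1 * x i + j.1.2 : ℝ) : EReal) := by
      intro i
      rw [convExt1, iSup_subtype']
  -- main bound
    calc ∑ i, convExt1 (g i) (x i)
        = ∑ i, ⨆ j : ι i, (((fun i (j : ι i) => j.1.1 * x i + j.1.2) i j : ℝ) : EReal) := by
          apply Finset.sum_congr rfl; intro i _; exact hconv1 i
      _ ≤ _ := by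
          apply sum_iSup_le_aux (inst := this) (fun i (j : ι i) => j.1.1 * x i + j.1.2)
            Finset.univ |>.trans
          apply iSup_le
          intro σ
          -- the candidate global affine function
          set a : Fin n → ℝ := fun i => (σ i).1.1 with ha
          set b : ℝ := ∑ i, (σ i).1.2 with hb
          have hadmN : ∀ k : Fin n → ℤ,
              (((∑ i, a i * (k i : ℝ)) + b : ℝ) : EReal) ≤ ∑ i, g i (k i) := by
            intro k
            have : ((∑ i, a i * (k i : ℝ)) + b : ℝ) = ∑ i, (a i * (k i : ℝ) + (σ i).1.2) := by
              rw [Finset.sum_add_distrib]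
            rw [this, ereal_coe_finset_sum]
            apply Finset.sum_le_sum
            intro i _
            exact (σ i).2 (k i)
          have heq : ((∑ i, ((fun i (j : ι i) => j.1.1 * x i + j.1.2) i (σ i)) : ℝ) : EReal)
              = (((∑ i, a i * x i) + b : ℝ) : EReal) := by
            norm_cast
            rw [Finset.sum_add_distrib]
          rw [heq]
          exact le_iSup₂ (f := fun (c : (Fin n → ℝ) × ℝ)
            (_ : ∀ k : Fin n → ℤ,
              (((∑ i, c.1 i * (k i : ℝ)) + c.2 : ℝ) : EReal) ≤
                (fun k : Fin n → ℤ => ∑ i, g i (k i)) k) =>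
            (((∑ i, c.1 i * x i) + c.2 : ℝ) : EReal)) (a, b) hadmN
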